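/- Let U be an open subset of {(ρ,z) ∈ ℝ² : ρ > 0}, let ψ : U → ℝ be twice continuously differentiable, let g, h : U → ℝ be continuously differentiable with (ρg)_ρ + (ρh)_z = 0 on U, and let γ : U → ℝ be twice continuously differentiable with γ_ρ = ρ(ψ_ρ² − ψ_z² − g) and γ_z = ρ(2ψ_ρψ_z − h) on U. Then at every point of U one has ψ_ρ² + ψ_z² + γ_ρρ + γ_zz = 2ρψ_ρ(ψ_ρρ + ψ_ρ/ρ + ψ_zz). In particular, if ψ_ρρ + ψ_ρ/ρ + ψ_zz = 0 on U, then ψ_ρ² + ψ_z² + γ_ρρ + γ_zz = 0 on U. -/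

import Mathlib

/-- Partial derivative with respect to the first coordinate `ρ`. -/
noncomputable def dρ (f : ℝ × ℝ → ℝ) (p : ℝ × ℝ) : ℝ := fderiv ℝ f p (1, 0)

/-- Partial derivative with respect to the second coordinate `z`. -/
noncomputable def dz (f : ℝ × ℝ → ℝ) (p : ℝ × ℝ) : ℝ := fderiv ℝ f p (0, 1)

private lemma pd_mul {a b : ℝ×ℝ→ℝ} {p : ℝ×ℝ} (v : ℝ×ℝ)
    (ha : DifferentiableAt ℝ a p) (hb : DifferentiableAt ℝ b p) :
    fderiv ℝ (fun q => a q * b q) p v = a p * fderiv ℝ b p v + b p * fderiv ℝ a p v := by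
  rw [fderiv_fun_mul ha hb]; simp

private lemma pd_fst (p v : ℝ×ℝ) : fderiv ℝ (fun q : ℝ×ℝ => q.1) p v = v.1 := by
  simp [fderiv_fst]

private lemma pd_clm {ψ : ℝ×ℝ→ℝ} {p : ℝ×ℝ} (v w : ℝ×ℝ)
    (hD : DifferentiableAt ℝ (fderiv ℝ ψ) p) :
    fderiv ℝ (fun q => fderiv ℝ ψ q v) p w = fderiv ℝ (fderiv ℝ ψ) p w v := by
  rw [fderiv_clm_apply hD (differentiableAt_const v)]; simp

private lemma pd_sub {a b : ℝ×ℝ→ℝ} {p : ℝ×ℝ} (v : ℝ×ℝ)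
    (ha : DifferentiableAt ℝ a p) (hb : DifferentiableAt ℝ b p) :
    fderiv ℝ (fun q => a q - b q) p v = fderiv ℝ a p v - fderiv ℝ b p v := by
  rw [fderiv_fun_sub ha hb]; simp

private lemma pd_sq {a : ℝ×ℝ→ℝ} {p : ℝ×ℝ} (v : ℝ×ℝ)
    (ha : DifferentiableAt ℝ a p) :
    fderiv ℝ (fun q => (a q)^2) p v = 2 * a p * fderiv ℝ a p v := by
  have : (fun q => (a q)^2) = fun q => a q * a q := by ext q; ring
  rw [this, pd_mul v ha ha]; ring

theorem gamma_second_order_identity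
    (U : Set (ℝ × ℝ)) (hUhalf : U ⊆ {p : ℝ × ℝ | 0 < p.1}) (hUo : IsOpen U)
    (ψ g h : ℝ × ℝ → ℝ)
    (hψ : ContDiffOn ℝ 2 ψ U) (hg : ContDiffOn ℝ 1 g U) (hh : ContDiffOn ℝ 1 h U)
    (hCR : ∀ p ∈ U, dρ (fun q => q.1 * g q) p + dz (fun q => q.1 * h q) p = 0)
    (γ : ℝ × ℝ → ℝ) (hγ : ContDiffOn ℝ 2 γ U)
    (hγρ : ∀ p ∈ U, dρ γ p = p.1 * ((dρ ψ p) ^ 2 - (dz ψ p) ^ 2 - g p))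
    (hγz : ∀ p ∈ U, dz γ p = p.1 * (2 * dρ ψ p * dz ψ p - h p)) :
    (∀ p ∈ U,
      (dρ ψ p) ^ 2 + (dz ψ p) ^ 2 + dρ (dρ γ) p + dz (dz γ) p
        = 2 * p.1 * dρ ψ p * (dρ (dρ ψ) p + dρ ψ p / p.1 + dz (dz ψ) p)) ∧
    ((∀ p ∈ U, dρ (dρ ψ) p + dρ ψ p / p.1 + dz (dz ψ) p = 0) →
      ∀ p ∈ U, (dρ ψ p) ^ 2 + (dz ψ p) ^ 2 + dρ (dρ γ) p + dz (dz γ) p = 0) := by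
  have main : ∀ p ∈ U,
      (dρ ψ p) ^ 2 + (dz ψ p) ^ 2 + dρ (dρ γ) p + dz (dz γ) p
        = 2 * p.1 * dρ ψ p * (dρ (dρ ψ) p + dρ ψ p / p.1 + dz (dz ψ) p) := by
    intro p hp
    have hpU : U ∈ nhds p := hUo.mem_nhds hp
    have hr : p.1 ≠ 0 := ne_of_gt (hUhalf hp)
    have hψ2 : ContDiffAt ℝ 2 ψ p := hψ.contDiffAt hpU
    have hD : DifferentiableAt ℝ (fderiv ℝ ψ) p :=
      (hψ2.fderiv_right (m := 1) (by norm_num)).differentiableAt one_ne_zero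
    have hgd : DifferentiableAt ℝ g p :=
      (hg.contDiffAt hpU).differentiableAt one_ne_zero
    have hhd : DifferentiableAt ℝ h p :=
      (hh.contDiffAt hpU).differentiableAt one_ne_zero
    -- differentiability of the partials of ψ
    have hψρd : DifferentiableAt ℝ (fun q => fderiv ℝ ψ q (1,0)) p :=
      hD.clm_apply (differentiableAt_const _)
    have hψzd : DifferentiableAt ℝ (fun q => fderiv ℝ ψ q (0,1)) p :=
      hD.clm_apply (differentiableAt_const _)
    -- symmetry of second derivative
    have hsym : fderiv ℝ (fderiv ℝ ψ) p (1,0) (0,1) = fderiv ℝ (fderiv ℝ ψ) p (0,1) (1,0) :=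
      hψ2.isSymmSndFDerivAt (by simp) (1,0) (0,1)
    have hS : dρ (dz ψ) p = dz (dρ ψ) p := by
      show fderiv ℝ (fun q => fderiv ℝ ψ q (0,1)) p (1,0)
          = fderiv ℝ (fun q => fderiv ℝ ψ q (1,0)) p (0,1)
      rw [pd_clm _ _ hD, pd_clm _ _ hD, hsym]
    -- CR relation expanded
    have hCR' : g p + p.1 * dρ g p + p.1 * dz h p = 0 := by
      have := hCR p hp
      unfold dρ dz at this ⊢
      rw [pd_mul (1,0) (differentiable_fst.differentiableAt) hgd,
          pd_mul (0,1) (differentiable_fst.differentiableAt) hhd, pd_fst, pd_fst] at this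
      simp at this
      linarith
    -- compute dρ (dρ γ) p
    have hEρ : dρ γ =ᶠ[nhds p] fun q => q.1 * ((fun q => fderiv ℝ ψ q (1,0)) q ^ 2
        - (fun q => fderiv ℝ ψ q (0,1)) q ^ 2 - g q) := by
      filter_upwards [hpU] with q hq
      exact hγρ q hq
    have hinρd : DifferentiableAt ℝ (fun q => (fderiv ℝ ψ q (1,0))^2
        - (fderiv ℝ ψ q (0,1))^2 - g q) p :=
      ((hψρd.pow 2).sub (hψzd.pow 2)).sub hgd
    have hγρρ : dρ (dρ γ) p
        = ((dρ ψ p)^2 - (dz ψ p)^2 - g p)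
          + p.1 * (2 * dρ ψ p * dρ (dρ ψ) p - 2 * dz ψ p * dρ (dz ψ) p - dρ g p) := by
      show fderiv ℝ (dρ γ) p (1,0) = _
      rw [hEρ.fderiv_eq]
      rw [pd_mul (1,0) (differentiable_fst.differentiableAt) hinρd, pd_fst]
      rw [pd_sub (1,0) ((hψρd.fun_pow 2).fun_sub (hψzd.fun_pow 2)) hgd,
          pd_sub (1,0) (hψρd.fun_pow 2) (hψzd.fun_pow 2), pd_sq (1,0) hψρd, pd_sq (1,0) hψzd]
      show p.1 * (2 * dρ ψ p * fderiv ℝ (fun q => fderiv ℝ ψ q (1,0)) p (1,0)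
            - 2 * dz ψ p * fderiv ℝ (fun q => fderiv ℝ ψ q (0,1)) p (1,0) - dρ g p)
          + ((dρ ψ p)^2 - (dz ψ p)^2 - g p) * 1 = _
      show p.1 * (2 * dρ ψ p * dρ (dρ ψ) p - 2 * dz ψ p * dρ (dz ψ) p - dρ g p)
          + ((dρ ψ p)^2 - (dz ψ p)^2 - g p) * 1 = _
      ring
    -- compute dz (dz γ) p
    have hEz : dz γ =ᶠ[nhds p] fun q => q.1 * (2 * (fun q => fderiv ℝ ψ q (1,0)) q
        * (fun q => fderiv ℝ ψ q (0,1)) q - h q) := by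
      filter_upwards [hpU] with q hq
      exact hγz q hq
    have hprodd : DifferentiableAt ℝ
        (fun q => 2 * fderiv ℝ ψ q (1,0) * fderiv ℝ ψ q (0,1)) p :=
      ((differentiableAt_const (2:ℝ)).mul hψρd).mul hψzd
    have hinzd : DifferentiableAt ℝ
        (fun q => 2 * fderiv ℝ ψ q (1,0) * fderiv ℝ ψ q (0,1) - h q) p := hprodd.sub hhd
    have hγzz : dz (dz γ) p
        = p.1 * (2 * (dz (dρ ψ) p * dz ψ p + dρ ψ p * dz (dz ψ) p) - dz h p) := by
      show fderiv ℝ (dz γ) p (0,1) = _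
      rw [hEz.fderiv_eq]
      rw [pd_mul (0,1) (differentiable_fst.differentiableAt) hinzd, pd_fst]
      rw [pd_sub (0,1) hprodd hhd]
      rw [pd_mul (0,1) ((differentiableAt_const (2:ℝ)).fun_mul hψρd) hψzd,
          pd_mul (0,1) (differentiableAt_const (2:ℝ)) hψρd]
      have hc2 : fderiv ℝ (fun _ : ℝ×ℝ => (2:ℝ)) p (0,1) = 0 := by simp
      rw [hc2]
      show p.1 * ((2 * dρ ψ p) * dz (dz ψ) p
            + dz ψ p * (2 * dz (dρ ψ) p + dρ ψ p * 0) - dz h p)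
          + (2 * dρ ψ p * dz ψ p - h p) * 0 = _
      ring
    rw [hγρρ, hγzz, hS]
    field_simp
    linear_combination (-1 : ℝ) * hCR'
  exact ⟨main, fun hlap p hp => by rw [main p hp, hlap p hp]; ring⟩
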